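/- Let B = {c_1, …, c_L} ⊂ ℝ with c_1 < c_2 < ⋯ < c_L, and let σ > 0. Then ∫_ℝ (argmin_{x ∈ B} |σz − x|)² · e^{−z²/2} dz/√(2π) = c_1² + Σ_{i=2}^L (c_i² − c_{i-1}²) · Q((c_i + c_{i-1})/(2σ)), where Q(t) = ∫_t^∞ e^{−u²/2} du/√(2π). -/
import Mathlib


open MeasureTheory

/-- The Gaussian tail function `Q(t) = ∫_t^∞ e^{-u²/2} du/√(2π)`. -/
noncomputable def gaussQ (t : ℝ) : ℝ :=
  ∫ u in Set.Ioi t, Real.exp (-u ^ 2 / 2) / Real.sqrt (2 * Real.pi)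

/-- Gaussian average of the squared nearest lattice point: for
`B = {c₀ < c₁ < ⋯ < c_{L-1}}` and any nearest-point selector `N`,
`∫ (N(σz))² e^{-z²/2} dz/√(2π)
  = c₀² + Σ_{i=1}^{L-1} (cᵢ² - c_{i-1}²) Q((cᵢ + c_{i-1})/(2σ))`. -/
noncomputable def gPhi (z : ℝ) : ℝ := Real.exp (-z ^ 2 / 2) / Real.sqrt (2 * Real.pi)

lemma gPhi_eq : gPhi = fun z => Real.exp (-(1/2 : ℝ) * z ^ 2) / Real.sqrt (2 * Real.pi) := by
  funext z; unfold gPhi; ring_nf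

lemma gPhi_integrable : Integrable gPhi := by
  rw [gPhi_eq]
  exact (integrable_exp_neg_mul_sq (by norm_num)).div_const _

lemma gPhi_total : ∫ z, gPhi z = 1 := by
  rw [gPhi_eq]
  rw [integral_div, integral_gaussian]
  rw [show Real.pi / (1/2) = 2 * Real.pi by ring]
  rw [div_self]
  positivity

lemma gaussQ_eq (t : ℝ) : gaussQ t = ∫ z in Set.Ioi t, gPhi z := rfl

lemma gaussQ_Iio (t : ℝ) : ∫ z in Set.Iio t, gPhi z = 1 - gaussQ t := by
  have h := intervalIntegral.integral_Iic_add_Ioi (gPhi_integrable.integrableOn (s := Set.Iic t))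
    (gPhi_integrable.integrableOn (s := Set.Ioi t))
  rw [gaussQ_eq, ← MeasureTheory.integral_Iic_eq_integral_Iio]
  rw [gPhi_total] at h
  linarith

lemma gaussQ_Ioo {s t : ℝ} (h : s ≤ t) : ∫ z in Set.Ioo s t, gPhi z = gaussQ s - gaussQ t := by
  have hu : Set.Ioc s t ∪ Set.Ioi t = Set.Ioi s := Set.Ioc_union_Ioi_eq_Ioi h
  have := MeasureTheory.setIntegral_union (f := gPhi) (μ := volume)
    (s := Set.Ioc s t) (t := Set.Ioi t)
    (Set.Ioc_disjoint_Ioi le_rfl) measurableSet_Ioi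
    (gPhi_integrable.integrableOn) (gPhi_integrable.integrableOn)
  rw [hu, ← gaussQ_eq, ← gaussQ_eq, MeasureTheory.integral_Ioc_eq_integral_Ioo] at this
  linarith

lemma abel_sum (b Q : ℕ → ℝ) : ∀ n, 1 ≤ n →
    (∑ i ∈ Finset.range n, b i * (Q i - Q (i+1))
      = b 0 * Q 0 - b (n-1) * Q n + ∑ i ∈ Finset.Ico 1 n, (b i - b (i-1)) * Q i) := by
  intro n
  induction n with
  | zero => omega
  | succ m ih =>
    intro _
    rcases Nat.lt_or_ge m 1 with h1 | h1
    · interval_cases m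
      simp
      ring
    · rw [Finset.sum_range_succ, ih h1, Finset.sum_Ico_succ_top (by omega)]
      simp only [Nat.add_sub_cancel]
      ring


theorem gaussian_nearest_point_second_moment
    (L : ℕ) (hL : 1 ≤ L) (c : ℕ → ℝ)
    (hc : ∀ i j, i < j → j < L → c i < c j)
    (σ : ℝ) (hσ : 0 < σ)
    (N : ℝ → ℝ)
    (hNmem : ∀ y, ∃ i < L, N y = c i)
    (hNmin : ∀ y, ∀ i < L, |y - N y| ≤ |y - c i|) :
    ∫ z : ℝ, (N (σ * z)) ^ 2 * (Real.exp (-z ^ 2 / 2) / Real.sqrt (2 * Real.pi))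
      = c 0 ^ 2 + ∑ i ∈ Finset.Ico 1 L,
          (c i ^ 2 - c (i - 1) ^ 2) * gaussQ ((c i + c (i - 1)) / (2 * σ)) := by
  classical
  have h2σ : (0:ℝ) < 2 * σ := by linarith
  set a : ℕ → ℝ := fun i => (c i + c (i-1)) / (2 * σ) with ha_def
  have hmono : ∀ i j, i ≤ j → j < L → c i ≤ c j := by
    intro i j hij hjL
    rcases eq_or_lt_of_le hij with h | h
    · rw [h]
    · exact (hc i j h hjL).le
  have hamono : ∀ p q, 1 ≤ p → p ≤ q → q < L → a p ≤ a q := by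
    intro p q h1 hpq hqL
    have h1' : c p ≤ c q := hmono p q hpq hqL
    have h2' : c (p-1) ≤ c (q-1) := hmono (p-1) (q-1) (by omega) (by omega)
    simp only [ha_def]
    apply div_le_div_of_nonneg_right (by linarith) h2σ.le
  -- the cell → value lemma
  have hNcell : ∀ i, i < L → ∀ z : ℝ, (i = 0 ∨ a i < z) → (i = L-1 ∨ z < a (i+1)) →
      N (σ * z) = c i := by
    intro i hiL z hlo hhi
    obtain ⟨k, hkL, hkEq⟩ := hNmem (σ * z)
    by_contra hne
    have hki : k ≠ i := by
      intro h; exact hne (hkEq.trans (by rw [h]))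
    have hstrict : |σ * z - c i| < |σ * z - c k| := by
      rcases lt_or_gt_of_ne hki with hik | hik
      · -- k < i : use lower bound
        have hi0 : i ≠ 0 := by omega
        have hz : a i < z := hlo.resolve_left hi0
        have hz2 : c i + c (i-1) < z * (2 * σ) := (div_lt_iff₀ h2σ).mp hz
        have hk1 : c k ≤ c (i-1) := hmono k (i-1) (by omega) (by omega)
        have hk2 : c k < c i := hc k i hik hiL
        exact sq_lt_sq.mp (by nlinarith)
      · -- i < k : use upper bound
        have hiL1 : i ≠ L - 1 := by omega
        have hz : z < a (i+1) := hhi.resolve_left hiL1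
        have hz2 : z * (2 * σ) < c (i+1) + c (i+1-1) := (lt_div_iff₀ h2σ).mp hz
        rw [Nat.add_sub_cancel] at hz2
        have hk1 : c (i+1) ≤ c k := hmono (i+1) k hik hkL
        have hk2 : c i < c k := hc i k hik hkL
        exact sq_lt_sq.mp (by nlinarith)
    have hmin := hNmin (σ * z) i hiL
    rw [hkEq] at hmin
    exact absurd hmin (not_le.mpr hstrict)
  set S : ℕ → Set ℝ := fun i => {z | (i = 0 ∨ a i < z) ∧ (i = L-1 ∨ z < a (i+1))} with hS_def
  have hSmeas : ∀ i, MeasurableSet (S i) := by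
    intro i
    have hrw : S i = {z | i = 0 ∨ a i < z} ∩ {z | i = L-1 ∨ z < a (i+1)} := rfl
    rw [hrw]
    apply MeasurableSet.inter
    · rcases eq_or_ne i 0 with h | h
      · simp [h]
      · have hr : {z : ℝ | i = 0 ∨ a i < z} = Set.Ioi (a i) := by
          ext z; simp [h, Set.mem_Ioi]
        rw [hr]; exact measurableSet_Ioi
    · rcases eq_or_ne i (L-1) with h | h
      · simp [h]
      · have hr : {z : ℝ | i = L-1 ∨ z < a (i+1)} = Set.Iio (a (i+1)) := by
          ext z; simp [h, Set.mem_Iio]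
        rw [hr]; exact measurableSet_Iio
  have hdisj : ∀ i, i < L → ∀ j, j < L → i < j → ∀ z, z ∈ S i → z ∉ S j := by
    intro i hiL j hjL hij z hzi hzj
    have hz1 : z < a (i+1) := hzi.2.resolve_left (by omega)
    have hz2 : a j < z := hzj.1.resolve_left (by omega)
    have hle : a (i+1) ≤ a j := hamono (i+1) j (by omega) (by omega) hjL
    linarith
  have hcov : ∀ z : ℝ, (∀ j, 1 ≤ j → j < L → z ≠ a j) → ∃ i, i < L ∧ z ∈ S i := by
    intro z hz
    set P : ℕ → Prop := fun j => 1 ≤ j ∧ a j < z with hP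
    set i := Nat.findGreatest P (L-1) with hi
    have hle : i ≤ L - 1 := Nat.findGreatest_le _
    refine ⟨i, by omega, ?_, ?_⟩
    · rcases eq_or_ne i 0 with h | h
      · exact Or.inl h
      · exact Or.inr (Nat.findGreatest_of_ne_zero hi.symm h).2
    · rcases eq_or_ne i (L-1) with h | h
      · exact Or.inl h
      · right
        have hgr := Nat.findGreatest_is_greatest (P := P) (n := L-1) (k := i+1)
          (by omega) (by omega)
        have h2 : ¬ a (i+1) < z := fun hcon => hgr ⟨by omega, hcon⟩
        have h3 : z ≠ a (i+1) := hz (i+1) (by omega) (by omega)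
        rcases lt_or_eq_of_le (not_lt.mp h2) with h4 | h4
        · exact h4
        · exact absurd h4 h3
  set h : ℕ → ℝ → ℝ := fun i => Set.indicator (S i) (fun z => c i ^ 2 * gPhi z) with hh_def
  have hint : ∀ i ∈ Finset.range L, Integrable (h i) := fun i _ =>
    (gPhi_integrable.const_mul _).indicator (hSmeas i)
  -- a.e. equality
  have hae : (fun z => N (σ * z)^2 * gPhi z) =ᵐ[volume]
      (fun z => ∑ i ∈ Finset.range L, h i z) := by
    have hE : (volume : Measure ℝ) (↑((Finset.Ico 1 L).image a)) = 0 :=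
      Set.Finite.measure_zero (Finset.finite_toSet _) volume
    have hae' : ∀ᵐ z : ℝ, z ∉ (↑((Finset.Ico 1 L).image a) : Set ℝ) :=
      measure_eq_zero_iff_ae_notMem.mp hE
    filter_upwards [hae'] with z hz
    have hz' : ∀ j, 1 ≤ j → j < L → z ≠ a j := by
      intro j h1 h2 hEq
      exact hz (by
        simp only [Finset.coe_image, Set.mem_image, Finset.mem_coe, Finset.mem_Ico]
        exact ⟨j, ⟨h1, h2⟩, hEq.symm⟩)
    obtain ⟨i, hiL, hzS⟩ := hcov z hz'
    have hNz : N (σ * z) = c i := hNcell i hiL z hzS.1 hzS.2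
    rw [hNz]
    rw [Finset.sum_eq_single i]
    · rw [hh_def]; simp only []
      rw [Set.indicator_of_mem hzS]
    · intro j hj hji
      rw [hh_def]; simp only []
      apply Set.indicator_of_notMem
      rcases lt_or_gt_of_ne hji with hlt | hlt
      · intro hzj
        exact hdisj j (Finset.mem_range.mp hj) i hiL hlt z hzj hzS
      · exact hdisj i hiL j (Finset.mem_range.mp hj) hlt z hzS
    · intro hcon
      exact absurd (Finset.mem_range.mpr hiL) hcon
  set Qx : ℕ → ℝ := fun i => if i = 0 then 1 else if i < L then gaussQ (a i) else 0 with hQx_def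
  have hcell : ∀ i ∈ Finset.range L, ∫ z in S i, gPhi z = Qx i - Qx (i+1) := by
    intro i hi
    have hiL : i < L := Finset.mem_range.mp hi
    rcases eq_or_ne i 0 with h0 | h0 <;> rcases eq_or_ne i (L-1) with hl | hl
    · -- L = 1, S 0 = univ
      have hL1 : L = 1 := by omega
      have hSu : S i = Set.univ := by
        ext z; simp [hS_def, h0, ← hl]
      rw [hSu, Measure.restrict_univ, gPhi_total, hQx_def]
      simp [h0, hL1]
    · -- i = 0, L ≥ 2 : S 0 = Iio (a 1)
      have hSu : S i = Set.Iio (a 1) := by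
        subst h0
        ext z
        simp only [hS_def, Set.mem_setOf_eq, Set.mem_Iio]
        constructor
        · intro hm
          rcases hm.2 with hcase | hcase
          · exact absurd hcase hl
          · exact hcase
        · intro hm
          exact ⟨Or.inl trivial, Or.inr hm⟩
      rw [hSu, gaussQ_Iio, hQx_def]
      have h1L : 1 < L := by omega
      simp [h0, h1L]
    · -- i = L-1 ≥ 1 : S i = Ioi (a i)
      have hSu : S i = Set.Ioi (a i) := by
        ext z
        simp only [hS_def, Set.mem_setOf_eq, Set.mem_Ioi]
        constructor
        · intro hm
          exact hm.1.resolve_left h0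
        · intro hm
          exact ⟨Or.inr hm, Or.inl hl⟩
      rw [hSu, ← gaussQ_eq, hQx_def]
      have : ¬ (i + 1 < L) := by omega
      have hi10 : i + 1 ≠ 0 := by omega
      simp [h0, hiL, this, hi10]
    · -- interior cell
      have h1i : 1 ≤ i := by omega
      have hi1L : i + 1 < L := by omega
      have hSu : S i = Set.Ioo (a i) (a (i+1)) := by
        ext z
        simp only [hS_def, Set.mem_setOf_eq, Set.mem_Ioo]
        constructor
        · intro hm
          exact ⟨hm.1.resolve_left h0, hm.2.resolve_left hl⟩
        · intro hm
          exact ⟨Or.inr hm.1, Or.inr hm.2⟩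
      rw [hSu, gaussQ_Ioo (hamono i (i+1) h1i (by omega) hi1L), hQx_def]
      simp [h0, hiL, hi1L]
  -- put everything together
  have key : ∫ z : ℝ, (N (σ * z)) ^ 2 * (Real.exp (-z ^ 2 / 2) / Real.sqrt (2 * Real.pi))
      = ∑ i ∈ Finset.range L, c i ^ 2 * (Qx i - Qx (i+1)) := by
    calc ∫ z : ℝ, (N (σ * z)) ^ 2 * (Real.exp (-z ^ 2 / 2) / Real.sqrt (2 * Real.pi))
        = ∫ z : ℝ, N (σ * z) ^ 2 * gPhi z := rfl
      _ = ∫ z : ℝ, ∑ i ∈ Finset.range L, h i z := integral_congr_ae hae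
      _ = ∑ i ∈ Finset.range L, ∫ z : ℝ, h i z := integral_finset_sum _ hint
      _ = ∑ i ∈ Finset.range L, c i ^ 2 * (Qx i - Qx (i+1)) := by
          refine Finset.sum_congr rfl fun i hi => ?_
          rw [hh_def]
          simp only []
          rw [MeasureTheory.integral_indicator (hSmeas i),
            integral_const_mul, hcell i hi]
  rw [key, abel_sum (fun i => c i ^ 2) Qx L hL]
  have hQ0 : Qx 0 = 1 := by simp [hQx_def]
  have hQL : Qx L = 0 := by
    have h1 : L ≠ 0 := by omega
    have h2 : ¬ (L < L) := lt_irrefl L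
    simp [hQx_def, h1, h2]
  rw [hQ0, hQL]
  have hsum : ∑ i ∈ Finset.Ico 1 L, (c i ^ 2 - c (i-1) ^ 2) * Qx i
      = ∑ i ∈ Finset.Ico 1 L, (c i ^ 2 - c (i - 1) ^ 2) * gaussQ ((c i + c (i - 1)) / (2 * σ)) := by
    refine Finset.sum_congr rfl fun i hi => ?_
    have h1 : 1 ≤ i := (Finset.mem_Ico.mp hi).1
    have h2 : i < L := (Finset.mem_Ico.mp hi).2
    have h3 : i ≠ 0 := by omega
    rw [hQx_def]
    simp only [h3, h2, if_false, if_true, ha_def]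
  rw [hsum]
  ring
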